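/- Let X ⊂ ℝ^N be a finite set of nonzero vectors whose span has dimension d. Then there exists a matrix A ∈ ℝ^{N×d} whose columns are of the form x/‖x‖₁ for some x ∈ X, such that: (1) for every x ∈ X, A A† x = x; (2) for every x ∈ X, ‖A† x‖₁ ≤ d·‖x‖₁; and (3) the operator ℓ1-norm of A satisfies ‖A‖₁ ≤ 1. -/

import Mathlib

open Matrix

/-- Moore–Penrose pseudoinverse of a matrix with linearly independent columns,
`M† = (Mᵀ M)⁻¹ Mᵀ`. -/
noncomputable def moorePenrose {m n : ℕ} (M : Matrix (Fin m) (Fin n) ℝ) :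
    Matrix (Fin n) (Fin m) ℝ :=
  (Mᵀ * M)⁻¹ * Mᵀ

/-- ℓ1-norm projection lemma: for a finite set `X` of nonzero vectors spanning a
`d`-dimensional subspace, there is a matrix `A` whose columns are ℓ1-normalized
elements of `X`, with `A A† x = x`, `‖A† x‖₁ ≤ d ‖x‖₁` for every `x ∈ X`, and
ℓ1-operator norm `‖A‖₁ ≤ 1`. -/
theorem l1_projection {N d : ℕ} (X : Finset (Fin N → ℝ)) (hX0 : ∀ x ∈ X, x ≠ 0)
    (hdim : Module.finrank ℝ (Submodule.span ℝ (X : Set (Fin N → ℝ))) = d) :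
    ∃ A : Matrix (Fin N) (Fin d) ℝ,
      (∀ j : Fin d, ∃ x ∈ X, (fun i => A i j) = fun i => x i / ∑ i', |x i'|) ∧
      (∀ x ∈ X, A.mulVec ((moorePenrose A).mulVec x) = x) ∧
      (∀ x ∈ X, ∑ j, |(moorePenrose A).mulVec x j| ≤ (d : ℝ) * ∑ i, |x i|) ∧
      (∀ z : Fin d → ℝ, ∑ i, |A.mulVec z i| ≤ ∑ j, |z j|) := by
  classical
  -- trivial case `X = ∅`
  rcases X.eq_empty_or_nonempty with rfl | hXne
  · have hd : d = 0 := by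
      rw [Finset.coe_empty, Submodule.span_empty, finrank_bot] at hdim
      exact hdim.symm
    subst hd
    refine ⟨Matrix.of fun i j => 0, fun j => j.elim0, by simp, by simp, fun z => ?_⟩
    have : ∀ i, (Matrix.of (fun (i : Fin N) (j : Fin 0) => (0:ℝ))).mulVec z i = 0 := by
      intro i; simp [Matrix.mulVec, dotProduct]
    simp [this]
  set W : Submodule ℝ (Fin N → ℝ) := Submodule.span ℝ (X : Set (Fin N → ℝ)) with hWdef
  set nx : (Fin N → ℝ) → ℝ := fun x => ∑ i, |x i| with hnxdef
  have hnx : ∀ x ∈ X, 0 < nx x := by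
    intro x hx
    have h0 : nx x ≠ 0 := by
      intro h
      apply hX0 x hx
      funext i
      have : ∀ i ∈ Finset.univ, |x i| = 0 := by
        refine (Finset.sum_eq_zero_iff_of_nonneg ?_).mp h
        intro i _; positivity
      simpa using abs_eq_zero.mp (this i (Finset.mem_univ i))
    have h1 : 0 ≤ nx x := Finset.sum_nonneg fun i _ => abs_nonneg _
    exact lt_of_le_of_ne h1 (Ne.symm h0)
  set V : Finset (Fin N → ℝ) := X.image (fun x => (nx x)⁻¹ • x) with hVdef
  have hVW : ∀ v ∈ V, v ∈ W := by
    intro v hv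
    rcases Finset.mem_image.mp hv with ⟨x, hx, rfl⟩
    exact Submodule.smul_mem _ _ (Submodule.subset_span hx)
  have hXV : ∀ x ∈ X, x = nx x • ((nx x)⁻¹ • x) := by
    intro x hx
    rw [smul_inv_smul₀ (ne_of_gt (hnx x hx))]
  have hWV : W ≤ Submodule.span ℝ (V : Set (Fin N → ℝ)) := by
    rw [hWdef]
    refine Submodule.span_le.mpr ?_
    intro x hx
    rw [hXV x hx]
    exact Submodule.smul_mem _ _ (Submodule.subset_span
      (Finset.mem_coe.mpr (Finset.mem_image_of_mem _ hx)))
  -- a linearly independent spanning subset of V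
  obtain ⟨t, htV, htspan, htli⟩ := exists_linearIndependent ℝ (V : Set (Fin N → ℝ))
  have htW : Submodule.span ℝ t = W := by
    rw [htspan]
    exact le_antisymm (Submodule.span_le.mpr hVW) hWV
  have htfin : t.Finite := Set.Finite.subset V.finite_toSet htV
  haveI : Fintype t := htfin.fintype
  have htcard : t.toFinset.card = d := by
    have := finrank_span_set_eq_card htli
    rw [htW, hdim] at this
    exact this.symm
  have htcard' : Fintype.card t = d := by rw [← Set.toFinset_card]; exact htcard
  obtain e : Fin d ≃ t := (Fintype.equivFinOfCardEq htcard').symm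
  -- basis of W from t
  have hmemW : ∀ v ∈ t, v ∈ W := fun v hv => hVW v (htV hv)
  set bW : Fin d → W := fun j => ⟨(e j : Fin N → ℝ), hmemW _ (e j).2⟩ with hbWdef
  have hliW : LinearIndependent ℝ bW := by
    apply LinearIndependent.of_comp W.subtype
    have : (W.subtype ∘ bW) = (fun j => ((e j : t) : Fin N → ℝ)) := rfl
    rw [this]
    exact htli.comp e e.injective
  have hspW : ⊤ ≤ Submodule.span ℝ (Set.range bW) := by
    have hinj := Submodule.map_injective_of_injective W.injective_subtype
    have himg : W.subtype '' (Set.range bW) = t := by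
      ext v
      constructor
      · rintro ⟨w, ⟨j, rfl⟩, rfl⟩; exact (e j).2
      · intro hv
        exact ⟨bW (e.symm ⟨v, hv⟩), ⟨e.symm ⟨v, hv⟩, rfl⟩, by simp [hbWdef]⟩
    have : Submodule.map W.subtype (Submodule.span ℝ (Set.range bW)) =
        Submodule.map W.subtype ⊤ := by
      rw [Submodule.map_span, himg, htW, Submodule.map_top, Submodule.range_subtype]
    exact le_of_eq (hinj this).symm
  set B : Module.Basis (Fin d) ℝ W := Module.Basis.mk hliW hspW with hBdef
  -- tuples of elements of V and their coordinate matrices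
  set wv : {v : Fin N → ℝ // v ∈ V} → W := fun p => ⟨p.1, hVW _ p.2⟩ with hwvdef
  set Mt : (Fin d → {v : Fin N → ℝ // v ∈ V}) → Matrix (Fin d) (Fin d) ℝ :=
    fun b => Matrix.of fun k j => B.repr (wv (b j)) k with hMtdef
  set b0 : Fin d → {v : Fin N → ℝ // v ∈ V} := fun j => ⟨(e j : Fin N → ℝ), htV (e j).2⟩
    with hb0def
  have hMb0 : Mt b0 = 1 := by
    ext k j
    have h1 : wv (b0 j) = B j := by
      rw [hBdef, Module.Basis.mk_apply]
      try rfl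
    rw [hMtdef]
    simp only [Matrix.of_apply, h1, Module.Basis.repr_self, Matrix.one_apply,
      Finsupp.single_apply]
    try exact if_congr eq_comm rfl rfl
  obtain ⟨b, -, hmax⟩ := Finset.exists_max_image (Finset.univ : Finset
    (Fin d → {v : Fin N → ℝ // v ∈ V})) (fun b => |(Mt b).det|)
    ⟨b0, Finset.mem_univ _⟩
  have hmax' : ∀ b', |(Mt b').det| ≤ |(Mt b).det| := fun b' =>
    hmax b' (Finset.mem_univ _)
  have hDpos : 0 < |(Mt b).det| := by
    have := hmax' b0
    rw [hMb0] at this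
    simp only [Matrix.det_one, abs_one] at this
    linarith
  have hDne : (Mt b).det ≠ 0 := fun h => by simp [h] at hDpos
  -- the matrix A
  set A : Matrix (Fin N) (Fin d) ℝ := Matrix.of fun i j => (b j).1 i with hAdef
  -- property 1 : columns of A
  have hcol : ∀ j : Fin d, ∃ x ∈ X, (fun i => A i j) = fun i => x i / ∑ i', |x i'| := by
    intro j
    rcases Finset.mem_image.mp (b j).2 with ⟨x, hx, hxe⟩
    refine ⟨x, hx, ?_⟩
    funext i
    rw [hAdef]
    simp only [Matrix.of_apply, ← hxe, Pi.smul_apply, smul_eq_mul]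
    rw [div_eq_inv_mul]
  -- columns have unit ℓ1 norm
  have hcolnorm : ∀ j : Fin d, ∑ i, |A i j| = 1 := by
    intro j
    rcases hcol j with ⟨x, hx, hxe⟩
    have : ∀ i, A i j = x i / nx x := fun i => congrFun hxe i
    simp only [this]
    have habs : ∀ i : Fin N, |x i / nx x| = |x i| / nx x := by
      intro i
      rw [abs_div, abs_of_pos (hnx x hx)]
    rw [Finset.sum_congr rfl fun i _ => habs i, ← Finset.sum_div]
    exact div_self (ne_of_gt (hnx x hx))
  -- property 4 : ℓ1 operator norm at most 1
  have hop : ∀ z : Fin d → ℝ, ∑ i, |A.mulVec z i| ≤ ∑ j, |z j| := by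
    intro z
    have h1 : ∀ i, |A.mulVec z i| ≤ ∑ j, |A i j| * |z j| := by
      intro i
      calc |A.mulVec z i| = |∑ j, A i j * z j| := rfl
        _ ≤ ∑ j, |A i j * z j| := Finset.abs_sum_le_sum_abs _ _
        _ = ∑ j, |A i j| * |z j| := by simp [abs_mul]
    calc ∑ i, |A.mulVec z i| ≤ ∑ i, ∑ j, |A i j| * |z j| :=
          Finset.sum_le_sum fun i _ => h1 i
      _ = ∑ j, ∑ i, |A i j| * |z j| := Finset.sum_comm
      _ = ∑ j, (∑ i, |A i j|) * |z j| := by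
          refine Finset.sum_congr rfl fun j _ => ?_
          rw [Finset.sum_mul]
      _ = ∑ j, |z j| := by
          refine Finset.sum_congr rfl fun j _ => ?_
          rw [hcolnorm j, one_mul]
  -- representation with small coefficients
  have hrep : ∀ x ∈ X, ∃ c : Fin d → ℝ,
      (∀ j, |c j| ≤ nx x) ∧ ∀ i, x i = ∑ j, c j * (b j).1 i := by
    intro x hx
    have hvV : (nx x)⁻¹ • x ∈ V := Finset.mem_image_of_mem _ hx
    set v : {u : Fin N → ℝ // u ∈ V} := ⟨(nx x)⁻¹ • x, hvV⟩ with hvdef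
    set wfun : Fin d → ℝ := fun k => B.repr (wv v) k with hwfundef
    set c0 : Fin d → ℝ := ((Mt b).det)⁻¹ • Matrix.cramer (Mt b) wfun with hc0def
    have hsolve : (Mt b).mulVec c0 = wfun := by
      rw [hc0def, Matrix.mulVec_smul, Matrix.mulVec_cramer, smul_smul,
        inv_mul_cancel₀ hDne, one_smul]
    have hupd : ∀ j : Fin d, (Mt b).updateCol j wfun =
        Mt (Function.update b j v) := by
      intro j
      ext k j'
      rw [Matrix.updateCol_apply]
      rcases eq_or_ne j' j with h | h
      · subst h; simp [hMtdef]; rfl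
      · simp [hMtdef, h, Function.update_of_ne h]
    have hc0small : ∀ j, |c0 j| ≤ 1 := by
      intro j
      rw [hc0def]
      simp only [Pi.smul_apply, smul_eq_mul, abs_mul, abs_inv]
      rw [Matrix.cramer_apply, hupd j]
      calc |(Mt b).det|⁻¹ * |(Mt (Function.update b j v)).det|
          ≤ |(Mt b).det|⁻¹ * |(Mt b).det| :=
            mul_le_mul_of_nonneg_left (hmax' _) (by positivity)
        _ = 1 := inv_mul_cancel₀ (ne_of_gt hDpos)
    -- recover the vector identity in W
    have hWid : (wv v) = ∑ j, c0 j • (wv (b j)) := by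
      apply B.ext_elem
      intro k
      have h1 : B.repr (∑ j, c0 j • (wv (b j))) k
          = ∑ j, c0 j * B.repr (wv (b j)) k := by
        rw [map_sum, Finsupp.coe_finset_sum, Finset.sum_apply]
        refine Finset.sum_congr rfl fun j _ => ?_
        simp [_root_.map_smul]
      rw [h1]
      have h2 : ∑ j, c0 j * B.repr (wv (b j)) k = (Mt b).mulVec c0 k := by
        simp only [hMtdef, Matrix.mulVec, dotProduct, Matrix.of_apply]
        exact Finset.sum_congr rfl fun j _ => (mul_comm _ _)
      rw [h2, hsolve]
    have hambid : ∀ i, ((nx x)⁻¹ • x) i = ∑ j, c0 j * (b j).1 i := by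
      intro i
      have := congrArg (fun w : W => (w : Fin N → ℝ) i) hWid
      simpa [hwvdef, hvdef] using this
    refine ⟨fun j => nx x * c0 j, fun j => ?_, fun i => ?_⟩
    · rw [abs_mul, abs_of_pos (hnx x hx)]
      calc nx x * |c0 j| ≤ nx x * 1 :=
            mul_le_mul_of_nonneg_left (hc0small j) (le_of_lt (hnx x hx))
        _ = nx x := mul_one _
    · have hxi : x i = nx x * ((nx x)⁻¹ • x) i := by
        have := congrFun (hXV x hx) i
        simpa using this
      rw [hxi, hambid i, Finset.mul_sum]
      exact Finset.sum_congr rfl fun j _ => by dsimp; ring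
  -- linear independence of the columns of A
  have hker : ∀ γ : Fin d → ℝ, A.mulVec γ = 0 → γ = 0 := by
    intro γ hγ
    have hWzero : (∑ j, γ j • (wv (b j))) = 0 := by
      apply Subtype.ext
      have : ((∑ j, γ j • (wv (b j)) : W) : Fin N → ℝ) = ∑ j, γ j • (b j).1 := by
        push_cast
        rfl
      rw [this]
      funext i
      have := congrFun hγ i
      simp only [Matrix.mulVec, dotProduct, hAdef, Matrix.of_apply] at this
      simpa [mul_comm] using this
    have hMz : (Mt b).mulVec γ = 0 := by
      funext k
      have h1 : (Mt b).mulVec γ k = B.repr (∑ j, γ j • (wv (b j))) k := by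
        rw [map_sum, Finsupp.coe_finset_sum, Finset.sum_apply]
        simp only [hMtdef, Matrix.mulVec, dotProduct, Matrix.of_apply]
        refine Finset.sum_congr rfl fun j _ => ?_
        simp [_root_.map_smul, mul_comm]
      rw [h1, hWzero]
      simp
    by_contra hne
    exact hDne (Matrix.exists_mulVec_eq_zero_iff.mp ⟨γ, hne, hMz⟩)
  have hgram : IsUnit (Aᵀ * A).det := by
    rw [isUnit_iff_ne_zero]
    intro h
    obtain ⟨γ, hγne, hγ⟩ := Matrix.exists_mulVec_eq_zero_iff.mpr h
    apply hγne
    apply hker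
    have h1 : (A.mulVec γ) ⬝ᵥ (A.mulVec γ) = 0 := by
      have h2 : γ ⬝ᵥ ((Aᵀ * A).mulVec γ) = 0 := by rw [hγ]; simp
      rw [← Matrix.mulVec_mulVec, Matrix.dotProduct_mulVec,
        Matrix.vecMul_transpose] at h2
      exact h2
    exact dotProduct_self_eq_zero.mp h1
  have hPI : ∀ γ : Fin d → ℝ, (moorePenrose A).mulVec (A.mulVec γ) = γ := by
    intro γ
    rw [moorePenrose, Matrix.mulVec_mulVec, Matrix.mul_assoc,
      Matrix.nonsing_inv_mul _ hgram, Matrix.one_mulVec]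
  have hAc : ∀ x ∈ X, ∀ c : Fin d → ℝ, (∀ i, x i = ∑ j, c j * (b j).1 i) →
      A.mulVec c = x := by
    intro x hx c hc
    funext i
    rw [hc i]
    simp only [Matrix.mulVec, dotProduct, hAdef, Matrix.of_apply]
    exact Finset.sum_congr rfl fun j _ => (mul_comm _ _)
  refine ⟨A, hcol, ?_, ?_, hop⟩
  · intro x hx
    obtain ⟨c, -, hc⟩ := hrep x hx
    have hAcx := hAc x hx c hc
    rw [← hAcx, hPI c, hAcx]
  · intro x hx
    obtain ⟨c, hcs, hc⟩ := hrep x hx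
    have hAcx := hAc x hx c hc
    have hmp : (moorePenrose A).mulVec x = c := by
      rw [← hAcx]; exact hPI c
    rw [hmp]
    calc ∑ j, |c j| ≤ ∑ _j : Fin d, nx x := Finset.sum_le_sum fun j _ => hcs j
      _ = (d : ℝ) * nx x := by
          rw [Finset.sum_const, Finset.card_univ, Fintype.card_fin, nsmul_eq_mul]
      _ = (d : ℝ) * ∑ i, |x i| := rfl
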